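/- Let μ be a compactly supported Borel probability measure on ℝ^d × ℝ^d with velocity barycenter v̄ = (v̄_1,…,v̄_d). Let k ∈ {1,…,d}, x̃ ∈ ℝ^d, a_k ∈ ℝ and X, W_k ≥ 0, and suppose supp(μ) ⊆ B(x̃, X) × {w ∈ ℝ^d : a_k ≤ w_k ≤ a_k + W_k}. Set r⁺ = (φ(0)/(φ(0) + φ(2X)))·(W_k + a_k − v̄_k). Then for every (x, v) ∈ ℝ^d × ℝ^d with ‖x − x̃‖ ≤ X and v_k − v̄_k > r⁺, one has ⟨ξ[μ](x, v), e_k⟩·(v_k − v̄_k) < 0, where e_k is the k-th standard basis vector of ℝ^d. -/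

import Mathlib

open MeasureTheory Metric Set

/-- The (topological) support of a measure. -/
def msupp {α : Type*} [TopologicalSpace α] [MeasurableSpace α]
    (μ : Measure α) : Set α :=
  {x | ∀ U : Set α, IsOpen U → x ∈ U → 0 < μ U}

lemma msupp_compl_null {α : Type*} [TopologicalSpace α] [MeasurableSpace α]
    [SecondCountableTopology α]
    (μ : Measure α) : μ (msupp μ)ᶜ = 0 := by
  obtain ⟨B, hBc, -, hB⟩ := TopologicalSpace.exists_countable_basis α
  have hsub : (msupp μ)ᶜ ⊆ ⋃₀ {U ∈ B | μ U = 0} := by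
    intro p hp
    simp only [msupp, mem_compl_iff, mem_setOf_eq, not_forall] at hp
    obtain ⟨U, hUo, hpU, hU0⟩ := hp
    have hU0' : μ U = 0 := by
      by_contra h
      exact hU0 (pos_iff_ne_zero.mpr h)
    obtain ⟨V, hVB, hpV, hVU⟩ := hB.exists_subset_of_mem_open hpU hUo
    exact ⟨V, ⟨hVB, le_antisymm (hU0' ▸ measure_mono hVU) bot_le⟩, hpV⟩
  refine measure_mono_null hsub ?_
  rw [measure_sUnion_null_iff (hBc.mono (sep_subset _ _))]
  exact fun U hU => hU.2

lemma integrable_aux {α : Type*} [TopologicalSpace α] [MeasurableSpace α]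
    [SecondCountableTopology α] [OpensMeasurableSpace α] {E : Type*} [NormedAddCommGroup E]
    (μ : Measure α) [IsFiniteMeasure μ] {K : Set α} (hKcpt : IsCompact K)
    (hKc : μ Kᶜ = 0) {f : α → E} (hf : Continuous f) : Integrable f μ := by
  obtain ⟨C, hC⟩ := hKcpt.exists_bound_of_continuousOn hf.continuousOn
  have haeK : ∀ᵐ p ∂μ, p ∈ K := by
    rw [ae_iff]
    exact hKc
  refine ⟨hf.aestronglyMeasurable, HasFiniteIntegral.of_bounded (C := C) ?_⟩
  filter_upwards [haeK] with p hp
  exact hC p hp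

/-- The Cucker–Smale interaction kernel. -/
noncomputable def xi {d : ℕ} (φ : ℝ → ℝ)
    (μ : Measure (EuclideanSpace ℝ (Fin d) × EuclideanSpace ℝ (Fin d)))
    (x v : EuclideanSpace ℝ (Fin d)) : EuclideanSpace ℝ (Fin d) :=
  ∫ p, φ (‖x - p.1‖) • (p.2 - v) ∂μ

set_option maxHeartbeats 1000000 in
theorem stmt1 {d : ℕ} (hd : 0 < d) (φ : ℝ → ℝ) (hφc : Continuous φ)
    (hφa : Antitone φ) (hφp : ∀ r : ℝ, 0 < φ r)
    (μ : Measure (EuclideanSpace ℝ (Fin d) × EuclideanSpace ℝ (Fin d)))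
    [IsProbabilityMeasure μ] (hcs : IsCompact (msupp μ))
    (k : Fin d) (xt : EuclideanSpace ℝ (Fin d)) (ak X Wk : ℝ)
    (hX : 0 ≤ X) (hWk : 0 ≤ Wk)
    (hsupp : msupp μ ⊆
      (closedBall xt X) ×ˢ {w : EuclideanSpace ℝ (Fin d) | ak ≤ w k ∧ w k ≤ ak + Wk})
    (vbar : EuclideanSpace ℝ (Fin d)) (hvbar : vbar = ∫ p, p.2 ∂μ)
    (rp : ℝ) (hrp : rp = φ 0 / (φ 0 + φ (2 * X)) * (Wk + ak - vbar k))
    (x v : EuclideanSpace ℝ (Fin d)) (hx : ‖x - xt‖ ≤ X) (hv : rp < v k - vbar k) :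
    xi φ μ x v k * (v k - vbar k) < 0 := by
  have hKc : μ (msupp μ)ᶜ = 0 := msupp_compl_null μ
  have haeK : ∀ᵐ p ∂μ, p ∈ msupp μ := by
    rw [ae_iff]; exact hKc
  set φ0 := φ 0 with hφ0d
  set φ2 := φ (2 * X) with hφ2d
  have hφ0 : 0 < φ0 := hφp 0
  have hφ2 : 0 < φ2 := hφp _
  have hφ02 : φ2 ≤ φ0 := hφa (by positivity)
  -- continuity facts
  have hck : Continuous (fun p : EuclideanSpace ℝ (Fin d) × EuclideanSpace ℝ (Fin d) => p.2 k) :=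
    (EuclideanSpace.proj (𝕜 := ℝ) k).continuous.comp continuous_snd
  have hcvec : Continuous (fun p : EuclideanSpace ℝ (Fin d) × EuclideanSpace ℝ (Fin d) =>
      φ (‖x - p.1‖) • (p.2 - v)) := by
    exact ((hφc.comp ((continuous_const.sub continuous_fst).norm)).smul
      (continuous_snd.sub continuous_const))
  have hcscal : Continuous (fun p : EuclideanSpace ℝ (Fin d) × EuclideanSpace ℝ (Fin d) =>
      φ (‖x - p.1‖) * (p.2 k - v k)) := by
    exact ((hφc.comp ((continuous_const.sub continuous_fst).norm)).mul
      (hck.sub continuous_const))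
  -- integrability
  have hi_vec := integrable_aux μ hcs hKc hcvec
  have hi_snd := integrable_aux μ hcs hKc
    (continuous_snd : Continuous (fun p : EuclideanSpace ℝ (Fin d) × EuclideanSpace ℝ (Fin d) => p.2))
  have hi_g := integrable_aux μ hcs hKc hck
  have hi_scal := integrable_aux μ hcs hKc hcscal
  have hi_h : Integrable (fun p :
      EuclideanSpace ℝ (Fin d) × EuclideanSpace ℝ (Fin d) => p.2 k - v k) μ :=
    hi_g.sub (integrable_const _)
  have hi_max : Integrable (fun p :
      EuclideanSpace ℝ (Fin d) × EuclideanSpace ℝ (Fin d) => max (p.2 k - v k) 0) μ :=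
    hi_h.sup (integrable_const 0)
  have hi_min : Integrable (fun p :
      EuclideanSpace ℝ (Fin d) × EuclideanSpace ℝ (Fin d) => min (p.2 k - v k) 0) μ :=
    hi_h.inf (integrable_const 0)
  -- coordinate formulas
  have hxi : xi φ μ x v k = ∫ p, φ (‖x - p.1‖) * (p.2 k - v k) ∂μ := by
    have h1 := (EuclideanSpace.proj (𝕜 := ℝ) k).integral_comp_comm hi_vec
    rw [xi]
    rw [show (∫ p, φ (‖x - p.1‖) • (p.2 - v) ∂μ) k
      = EuclideanSpace.proj (𝕜 := ℝ) k (∫ p, φ (‖x - p.1‖) • (p.2 - v) ∂μ) from rfl, ← h1]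
    congr 1
  have hvk : vbar k = ∫ p, p.2 k ∂μ := by
    have h1 := (EuclideanSpace.proj (𝕜 := ℝ) k).integral_comp_comm hi_snd
    rw [hvbar]
    exact h1.symm
  -- a.e. bounds
  have hbd : ∀ᵐ p ∂μ, φ2 ≤ φ (‖x - p.1‖) ∧ φ (‖x - p.1‖) ≤ φ0
      ∧ ak ≤ p.2 k ∧ p.2 k ≤ ak + Wk := by
    filter_upwards [haeK] with p hp
    obtain ⟨h1, h2⟩ := hsupp hp
    have hdist : ‖x - p.1‖ ≤ 2 * X := by
      have : ‖xt - p.1‖ ≤ X := by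
        rw [← dist_eq_norm]
        exact dist_comm p.1 xt ▸ mem_closedBall.mp h1
      calc ‖x - p.1‖ = ‖(x - xt) + (xt - p.1)‖ := by rw [sub_add_sub_cancel]
        _ ≤ ‖x - xt‖ + ‖xt - p.1‖ := norm_add_le _ _
        _ ≤ 2 * X := by linarith
    exact ⟨hφa hdist, hφa (norm_nonneg _), h2.1, h2.2⟩
  -- barycenter bound
  have hM0 : vbar k ≤ ak + Wk := by
    rw [hvk]
    have h1 : ∫ p, p.2 k ∂μ ≤ ∫ _p :
        EuclideanSpace ℝ (Fin d) × EuclideanSpace ℝ (Fin d), (ak + Wk) ∂μ := by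
      refine integral_mono_ae hi_g (integrable_const _) ?_
      filter_upwards [hbd] with p hp using hp.2.2.2
    simpa using h1
  set δ := v k - vbar k with hδd
  set M := Wk + ak - vbar k with hMd
  have hM : 0 ≤ M := by rw [hMd]; linarith
  have hrp0 : 0 ≤ rp := by
    rw [hrp]
    exact mul_nonneg (div_nonneg hφ0.le (by linarith)) (by linarith)
  have hδpos : 0 < δ := lt_of_le_of_lt hrp0 hv
  have hδM : φ0 * M < δ * (φ0 + φ2) := by
    have h := hv
    rw [hrp] at h
    rw [div_mul_eq_mul_div, div_lt_iff₀ (by linarith : (0:ℝ) < φ0 + φ2)] at h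
    exact h
  -- integrals
  set A := ∫ p, max (p.2 k - v k) 0 ∂μ with hAd
  have hA0 : 0 ≤ A := integral_nonneg fun p => le_max_right _ _
  have hinth : ∫ p, (p.2 k - v k) ∂μ = -δ := by
    rw [integral_sub hi_g (integrable_const _)]
    simp [← hvk, hδd]
  have hB : ∫ p, min (p.2 k - v k) 0 ∂μ = -δ - A := by
    have : (fun p : EuclideanSpace ℝ (Fin d) × EuclideanSpace ℝ (Fin d) =>
        min (p.2 k - v k) 0) = fun p => (p.2 k - v k) - max (p.2 k - v k) 0 := by
      ext p
      rcases le_total (p.2 k - v k) 0 with h | h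
      · rw [min_eq_left h, max_eq_right h]; ring
      · rw [min_eq_right h, max_eq_left h]; ring
    rw [this, integral_sub hi_h hi_max, hinth, hAd]
  have hAle : A ≤ max (M - δ) 0 := by
    have h1 : A ≤ ∫ _p :
        EuclideanSpace ℝ (Fin d) × EuclideanSpace ℝ (Fin d), max (M - δ) 0 ∂μ := by
      refine integral_mono_ae hi_max (integrable_const _) ?_
      filter_upwards [hbd] with p hp
      have : p.2 k - v k ≤ M - δ := by rw [hMd, hδd]; linarith [hp.2.2.2]
      exact max_le_max this le_rfl
    simpa using h1
  -- main estimate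
  have hxineg : xi φ μ x v k < 0 := by
    rw [hxi]
    have hle : ∫ p, φ (‖x - p.1‖) * (p.2 k - v k) ∂μ
        ≤ φ0 * A + φ2 * (-δ - A) := by
      rw [← hB, hAd, ← integral_const_mul, ← integral_const_mul,
        ← integral_add (hi_max.const_mul _) (hi_min.const_mul _)]
      refine integral_mono_ae hi_scal ((hi_max.const_mul _).add (hi_min.const_mul _)) ?_
      filter_upwards [hbd] with p hp
      obtain ⟨hl, hu, ha, hw⟩ := hp
      rcases le_total (p.2 k - v k) 0 with h | h
      · rw [max_eq_right h, min_eq_left h]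
        nlinarith
      · rw [max_eq_left h, min_eq_right h]
        nlinarith
    refine lt_of_le_of_lt hle ?_
    rcases le_total (M - δ) 0 with h | h
    · have hA0' : A ≤ 0 := le_trans hAle (by rw [max_eq_right h])
      nlinarith
    · have hA' : A ≤ M - δ := le_trans hAle (by rw [max_eq_left h])
      nlinarith [mul_le_mul_of_nonneg_left hA' (by linarith : (0:ℝ) ≤ φ0 - φ2),
        mul_nonpos_of_nonneg_of_nonpos hφ2.le (by linarith : δ - M ≤ 0)]
  exact mul_neg_of_neg_of_pos hxineg hδpos
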